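/- Let λ : ℕ → ℝ with λ(n) > 0 for all n, let k : ℕ → ℝ with k(j) > 0, and set ν(I) = (I!/|I|!)·λ(|I|)⁻¹·∏_r k(r)^(2·I(r)). Fix j : ℕ and let e_j denote the multi-index with a single 1 in position j. Define, for coefficient functions b : (ℕ →₀ ℕ) → ℂ: the creation operator (A†_j b)(I) = b(I - e_j)/k(j) when I(j) ≥ 1 and 0 otherwise, and the annihilation operator (A_j b)(I) = k(j)·(I(j)+1)·(λ(|I|)/((|I|+1)·λ(|I|+1)))·b(I + e_j). Then for all finitely supported a, b : (ℕ →₀ ℕ) → ℂ, ∑_I conj((A†_j a)(I))·b(I)·ν(I) = ∑_I conj(a(I))·(A_j b)(I)·ν(I). -/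

import Mathlib

open scoped BigOperators

/-- The degree `|I| = ∑_r I r` of a multi-index. -/
noncomputable def mdeg (I : ℕ →₀ ℕ) : ℕ := I.sum fun _ n => n

/-- The factorial `I! = ∏_r (I r)!` of a multi-index. -/
noncomputable def mfact (I : ℕ →₀ ℕ) : ℕ := I.prod fun _ n => n.factorial

/-- The weight `ν(I) = (I!/|I|!)·λ(|I|)⁻¹·∏_r k(r)^(2·I(r))`. -/
noncomputable def nuwt (lam : ℕ → ℝ) (k : ℕ → ℝ) (I : ℕ →₀ ℕ) : ℝ :=
  ((mfact I : ℝ) / (Nat.factorial (mdeg I) : ℝ)) * (lam (mdeg I))⁻¹ *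
    ∏ r ∈ I.support, k r ^ (2 * I r)

/-- The creation operator `(A†_j b)(I) = b(I - e_j)/k(j)` if `I j ≥ 1`, else `0`. -/
noncomputable def creOp (k : ℕ → ℝ) (j : ℕ) (b : (ℕ →₀ ℕ) → ℂ) (I : ℕ →₀ ℕ) : ℂ :=
  if 1 ≤ I j then b (I - Finsupp.single j 1) / (k j : ℂ) else 0

/-- The annihilation operator
`(A_j b)(I) = k(j)·(I(j)+1)·(λ(|I|)/((|I|+1)·λ(|I|+1)))·b(I + e_j)`. -/
noncomputable def annOp (lam : ℕ → ℝ) (k : ℕ → ℝ) (j : ℕ) (b : (ℕ →₀ ℕ) → ℂ)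
    (I : ℕ →₀ ℕ) : ℂ :=
  (k j : ℂ) * ((I j : ℂ) + 1) *
    ((lam (mdeg I) : ℂ) / (((mdeg I : ℂ) + 1) * (lam (mdeg I + 1) : ℂ))) *
    b (I + Finsupp.single j 1)

lemma prod_eq_insert {M : Type*} [CommMonoid M] (J : ℕ →₀ ℕ) (j : ℕ)
    (f : ℕ → ℕ → M) (hf : ∀ r, f r 0 = 1) :
    J.prod f = f j (J j) * ∏ r ∈ J.support.erase j, f r (J r) := by
  rw [Finsupp.prod_of_support_subset J (Finset.subset_insert j J.support) f
    (fun i _ => hf i), ← Finset.mul_prod_erase _ _ (Finset.mem_insert_self j _),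
    Finset.erase_insert_eq_erase]

lemma prod_add_single {M : Type*} [CommMonoid M] (J : ℕ →₀ ℕ) (j : ℕ)
    (f : ℕ → ℕ → M) (hf : ∀ r, f r 0 = 1) :
    (J + Finsupp.single j 1).prod f =
      f j (J j + 1) * ∏ r ∈ J.support.erase j, f r (J r) := by
  have hsub : (J + Finsupp.single j 1).support ⊆ insert j J.support := by
    refine (Finsupp.support_add).trans ?_
    intro x hx
    rcases Finset.mem_union.1 hx with h | h
    · exact Finset.mem_insert_of_mem h
    · simp only [Finsupp.support_single_ne_zero j one_ne_zero, Finset.mem_singleton] at h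
      simp [h]
  rw [Finsupp.prod_of_support_subset _ hsub f (fun i _ => hf i),
    ← Finset.mul_prod_erase _ _ (Finset.mem_insert_self j _),
    Finset.erase_insert_eq_erase]
  congr 1
  · simp
  · refine Finset.prod_congr rfl fun r hr => ?_
    have : r ≠ j := (Finset.mem_erase.1 hr).1
    simp [Finsupp.single_apply, this.symm]

lemma mdeg_add_single (J : ℕ →₀ ℕ) (j : ℕ) :
    mdeg (J + Finsupp.single j 1) = mdeg J + 1 := by
  unfold mdeg
  rw [Finsupp.sum_add_index' (fun _ => rfl) (fun _ _ _ => rfl),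
    Finsupp.sum_single_index rfl]

lemma mfact_add_single (J : ℕ →₀ ℕ) (j : ℕ) :
    mfact (J + Finsupp.single j 1) = (J j + 1) * mfact J := by
  unfold mfact
  rw [prod_add_single J j _ (fun _ => rfl), prod_eq_insert J j _ (fun _ => rfl),
    Nat.factorial_succ, mul_assoc]

lemma kprod_add_single (k : ℕ → ℝ) (J : ℕ →₀ ℕ) (j : ℕ) :
    ((J + Finsupp.single j 1).prod fun r n => k r ^ (2 * n)) =
      k j ^ 2 * J.prod fun r n => k r ^ (2 * n) := by
  rw [prod_add_single J j _ (fun _ => by simp),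
    prod_eq_insert J j (fun r n => k r ^ (2 * n)) (fun _ => by simp)]
  rw [mul_add, pow_add]
  ring

lemma nuwt_add_single (lam : ℕ → ℝ) (hlam_pos : ∀ n, 0 < lam n)
    (k : ℕ → ℝ) (hk : ∀ r, 0 < k r) (j : ℕ) (J : ℕ →₀ ℕ) :
    nuwt lam k (J + Finsupp.single j 1) =
      k j ^ 2 * ((J j : ℝ) + 1) *
        (lam (mdeg J) / (((mdeg J : ℝ) + 1) * lam (mdeg J + 1))) * nuwt lam k J := by
  have hk2 := kprod_add_single k J j
  simp only [Finsupp.prod] at hk2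
  unfold nuwt
  rw [mdeg_add_single, mfact_add_single, hk2, Nat.factorial_succ]
  have h1 : lam (mdeg J) ≠ 0 := (hlam_pos _).ne'
  have h2 : lam (mdeg J + 1) ≠ 0 := (hlam_pos _).ne'
  have h3 : ((Nat.factorial (mdeg J) : ℝ)) ≠ 0 := Nat.cast_ne_zero.2 (Nat.factorial_ne_zero _)
  have h4 : ((mdeg J : ℝ) + 1) ≠ 0 := by positivity
  push_cast
  field_simp

theorem stmt10 (lam : ℕ → ℝ) (hlam_pos : ∀ n, 0 < lam n)
    (k : ℕ → ℝ) (hk : ∀ r, 0 < k r) (j : ℕ)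
    (a b : (ℕ →₀ ℕ) → ℂ)
    (ha : (Function.support a).Finite) (hb : (Function.support b).Finite) :
    ∑ᶠ I : ℕ →₀ ℕ, (starRingEnd ℂ) (creOp k j a I) * b I * (nuwt lam k I : ℂ) =
    ∑ᶠ I : ℕ →₀ ℕ, (starRingEnd ℂ) (a I) * annOp lam k j b I * (nuwt lam k I : ℂ) := by
  set g : (ℕ →₀ ℕ) → (ℕ →₀ ℕ) := fun J => J + Finsupp.single j 1 with hg_def
  have hg : Function.Injective g := fun x y h => add_right_cancel h
  set F : (ℕ →₀ ℕ) → ℂ :=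
    fun I => (starRingEnd ℂ) (creOp k j a I) * b I * (nuwt lam k I : ℂ) with hF_def
  have hsupp : ∀ x ∈ Function.support F, x ∈ Set.range g := by
    intro x hx
    have h1 : 1 ≤ x j := by
      by_contra h
      apply hx
      simp [hF_def, creOp, h]
    refine ⟨x - Finsupp.single j 1, ?_⟩
    simp only [hg_def]
    exact tsub_add_cancel_of_le (Finsupp.single_le_iff.2 h1)
  calc ∑ᶠ I, F I = ∑ᶠ I ∈ Set.univ, F I := (finsum_mem_univ F).symm
    _ = ∑ᶠ I ∈ Set.range g, F I := by
        apply finsum_mem_inter_support_eq'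
        intro x hx
        simp only [Set.mem_univ, true_iff]
        exact hsupp x hx
    _ = ∑ᶠ J, F (g J) := finsum_mem_range hg
    _ = ∑ᶠ I, (starRingEnd ℂ) (a I) * annOp lam k j b I * (nuwt lam k I : ℂ) := by
        apply finsum_congr
        intro J
        have hgj : g J j = J j + 1 := by simp [hg_def]
        have hcre : creOp k j a (g J) = a J / (k j : ℂ) := by
          rw [creOp, if_pos (by omega)]
          have he : g J - Finsupp.single j 1 = J := by
            simp only [hg_def]
            exact add_tsub_cancel_right J (Finsupp.single j 1)
          rw [he]
        have hnu : (nuwt lam k (g J) : ℂ) =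
            (k j : ℂ) ^ 2 * ((J j : ℂ) + 1) *
              ((lam (mdeg J) : ℂ) / (((mdeg J : ℂ) + 1) * (lam (mdeg J + 1) : ℂ))) *
              (nuwt lam k J : ℂ) := by
          rw [hg_def, nuwt_add_single lam hlam_pos k hk j J]
          push_cast
          ring
        have hkne : (k j : ℂ) ≠ 0 := by
          exact_mod_cast (hk j).ne'
        rw [hF_def]
        simp only [hcre, hnu, annOp, map_div₀, Complex.conj_ofReal]
        rw [hg_def]
        have hl1 : ((lam (mdeg J) : ℂ)) ≠ 0 := by exact_mod_cast (hlam_pos _).ne'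
        have hl2 : ((lam (mdeg J + 1) : ℂ)) ≠ 0 := by exact_mod_cast (hlam_pos _).ne'
        have hd : ((mdeg J : ℂ) + 1) ≠ 0 := by
          exact_mod_cast (Nat.cast_add_one_ne_zero (mdeg J) : ((mdeg J : ℂ) + 1) ≠ 0)
        field_simp
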